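/- Let r ∈ ℂ, and let K_r(z;τ) = (2i/(z-τ)) · ((z̄-τ)/(z̄-z))^{r-1} for z, τ ∈ ℍ, z ≠ τ. Then ξ_r K_r(·;τ)(z) = (r̄ - 1) · ((z - τ̄)/(2i))^{r̄-2}; in particular K_r(·;τ) is r-harmonic on ℍ \ {τ}. -/

import Mathlib

open Complex

/-- The kernel `K_r(z;τ) = (2i/(z-τ)) ((z̄-τ)/(z̄-z))^(r-1)` (principal branch; the
ratio never lies in `(-∞,0]` for `z, τ` in the upper half-plane, so this is the
continuous branch). -/
noncomputable def Kker (r : ℂ) (z τ : ℂ) : ℂ :=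
  2 * Complex.I / (z - τ) *
    (((starRingEnd ℂ z - τ) / (starRingEnd ℂ z - z)) ^ (r - 1))

noncomputable def wderivBar (F : ℂ → ℂ) (z : ℂ) : ℂ :=
  (fderiv ℝ F z 1 + Complex.I * fderiv ℝ F z Complex.I) / 2

noncomputable def wderiv (F : ℂ → ℂ) (z : ℂ) : ℂ :=
  (fderiv ℝ F z 1 - Complex.I * fderiv ℝ F z Complex.I) / 2

noncomputable def hlaplacian (r : ℂ) (F : ℂ → ℂ) (z : ℂ) : ℂ :=
  -4 * (z.im : ℂ) ^ 2 * wderiv (fun w => wderivBar F w) z +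
    2 * Complex.I * r * (z.im : ℂ) * wderivBar F z

noncomputable def shadowOp (r : ℂ) (F : ℂ → ℂ) (z : ℂ) : ℂ :=
  2 * Complex.I * ((z.im : ℂ) ^ (starRingEnd ℂ r)) * (starRingEnd ℂ) (wderivBar F z)

/-! ### Auxiliary machinery -/

noncomputable def G2aux (r τ : ℂ) (p : ℂ × ℂ) : ℂ :=
  -2 * Complex.I * (r - 1) * (((p.2 - τ) / (p.2 - p.1)) ^ (r - 2)) / (p.2 - p.1) ^ 2

noncomputable def P2aux (r τ : ℂ) (z : ℂ) : ℂ :=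
  -2 * Complex.I * (r - 1) *
      ((r - 2) * (((starRingEnd ℂ z - τ) / (starRingEnd ℂ z - z)) ^ (r - 3)) *
          (starRingEnd ℂ z - τ) +
        2 * (((starRingEnd ℂ z - τ) / (starRingEnd ℂ z - z)) ^ (r - 2)) *
          (starRingEnd ℂ z - z)) /
    (starRingEnd ℂ z - z) ^ 4

lemma pair_hasFDerivAt (G : ℂ × ℂ → ℂ) (z : ℂ)
    (hG : DifferentiableAt ℂ G (z, starRingEnd ℂ z)) :
    HasFDerivAt (fun w => G (w, starRingEnd ℂ w))
      ((fderiv ℂ G (z, starRingEnd ℂ z) (1, 0)) • (ContinuousLinearMap.id ℝ ℂ)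
        + (fderiv ℂ G (z, starRingEnd ℂ z) (0, 1)) • (conjCLE.toContinuousLinearMap)) z := by
  set L := fderiv ℂ G (z, starRingEnd ℂ z) with hL
  have hj : HasFDerivAt (fun w : ℂ => (w, starRingEnd ℂ w))
      ((ContinuousLinearMap.id ℝ ℂ).prod (conjCLE.toContinuousLinearMap)) z :=
    ((ContinuousLinearMap.id ℝ ℂ).prod (conjCLE.toContinuousLinearMap)).hasFDerivAt
  have h := (hG.hasFDerivAt.restrictScalars ℝ).comp z hj
  refine HasFDerivAt.congr_fderiv h ?_
  symm
  apply ContinuousLinearMap.ext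
  intro v
  have hv : (v, starRingEnd ℂ v) = v • ((1:ℂ), (0:ℂ)) + (starRingEnd ℂ v) • ((0:ℂ), (1:ℂ)) := by
    simp [Prod.ext_iff]
  simp only [ContinuousLinearMap.add_apply, ContinuousLinearMap.smul_apply,
    ContinuousLinearMap.coe_comp', Function.comp_apply,
    ContinuousLinearMap.coe_restrictScalars', ContinuousLinearMap.prod_apply,
    ContinuousLinearMap.id_apply, ContinuousLinearEquiv.coe_coe]
  have hc : conjCLE v = starRingEnd ℂ v := rfl
  rw [hc, hv, map_add, map_smul, map_smul]
  simp only [smul_eq_mul, ← hL]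
  ring

lemma pair_fst (G : ℂ × ℂ → ℂ) (z P : ℂ) (hG : DifferentiableAt ℂ G (z, starRingEnd ℂ z))
    (hP : HasDerivAt (fun u => G (u, starRingEnd ℂ z)) P z) :
    fderiv ℂ G (z, starRingEnd ℂ z) (1, 0) = P := by
  have hg : HasDerivAt (fun u : ℂ => (u, starRingEnd ℂ z)) ((1:ℂ), (0:ℂ)) z :=
    (hasDerivAt_id z).prodMk (hasDerivAt_const z _)
  have h1 := hG.hasFDerivAt.comp_hasDerivAt z hg
  exact h1.unique hP

lemma pair_snd (G : ℂ × ℂ → ℂ) (z Q : ℂ) (hG : DifferentiableAt ℂ G (z, starRingEnd ℂ z))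
    (hQ : HasDerivAt (fun v => G (z, v)) Q (starRingEnd ℂ z)) :
    fderiv ℂ G (z, starRingEnd ℂ z) (0, 1) = Q := by
  have hg : HasDerivAt (fun v : ℂ => ((z : ℂ), v)) ((0:ℂ), (1:ℂ)) (starRingEnd ℂ z) :=
    (hasDerivAt_const _ _).prodMk (hasDerivAt_id _)
  have h1 := hG.hasFDerivAt.comp_hasDerivAt (starRingEnd ℂ z) hg
  exact h1.unique hQ

lemma wderivBar_pair (G : ℂ × ℂ → ℂ) (z Q : ℂ) (hG : DifferentiableAt ℂ G (z, starRingEnd ℂ z))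
    (hQ : HasDerivAt (fun v => G (z, v)) Q (starRingEnd ℂ z)) :
    wderivBar (fun w => G (w, starRingEnd ℂ w)) z = Q := by
  have h := pair_hasFDerivAt G z hG
  rw [wderivBar, h.fderiv]
  rw [pair_snd G z Q hG hQ]
  simp only [ContinuousLinearMap.add_apply, ContinuousLinearMap.smul_apply,
    ContinuousLinearMap.id_apply, ContinuousLinearEquiv.coe_coe, smul_eq_mul]
  have h1 : (conjCLE (1:ℂ)) = 1 := by simp
  have h2 : (conjCLE Complex.I) = -Complex.I := by simp
  rw [h1, h2]
  field_simp
  ring_nf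
  rw [Complex.I_sq]
  ring

lemma wderiv_pair (G : ℂ × ℂ → ℂ) (z P : ℂ) (hG : DifferentiableAt ℂ G (z, starRingEnd ℂ z))
    (hP : HasDerivAt (fun u => G (u, starRingEnd ℂ z)) P z) :
    wderiv (fun w => G (w, starRingEnd ℂ w)) z = P := by
  have h := pair_hasFDerivAt G z hG
  rw [wderiv, h.fderiv]
  rw [pair_fst G z P hG hP]
  simp only [ContinuousLinearMap.add_apply, ContinuousLinearMap.smul_apply,
    ContinuousLinearMap.id_apply, ContinuousLinearEquiv.coe_coe, smul_eq_mul]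
  have h1 : (conjCLE (1:ℂ)) = 1 := by simp
  have h2 : (conjCLE Complex.I) = -Complex.I := by simp
  rw [h1, h2]
  field_simp
  ring_nf
  rw [Complex.I_sq]
  ring

/-! ### Pointwise facts -/

section facts
variable {r τ z : ℂ}

lemma hB0 (hz : 0 < z.im) : starRingEnd ℂ z - z ≠ 0 := by
  intro h
  have h2 : (starRingEnd ℂ z - z).im = -2 * z.im := by
    simp [Complex.sub_im, Complex.conj_im]; ring
  rw [h] at h2
  simp at h2
  linarith

lemma hslit (hτ : 0 < τ.im) (hz : 0 < z.im) :
    (starRingEnd ℂ z - τ) / (starRingEnd ℂ z - z) ∈ slitPlane := by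
  rw [Complex.mem_slitPlane_iff]
  left
  rw [Complex.div_re]
  have hn : Complex.normSq (starRingEnd ℂ z - z) = 4 * z.im ^ 2 := by
    simp [Complex.normSq_apply, Complex.sub_re, Complex.sub_im, Complex.conj_re, Complex.conj_im]
    ring
  rw [hn]
  simp only [Complex.sub_re, Complex.sub_im, Complex.conj_re, Complex.conj_im]
  have h1 : (z.re - τ.re) * (z.re - z.re) = 0 := by ring
  rw [h1, zero_div, zero_add]
  apply div_pos
  · nlinarith
  · positivity

lemma hslit0 (hτ : 0 < τ.im) (hz : 0 < z.im) :
    (starRingEnd ℂ z - τ) / (starRingEnd ℂ z - z) ≠ 0 :=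
  slitPlane_ne_zero (hslit hτ hz)

lemma hBy (z : ℂ) : starRingEnd ℂ z - z = -(2 * (z.im : ℂ) * Complex.I) := by
  have := Complex.sub_conj z
  have h2 : starRingEnd ℂ z - z = -(z - starRingEnd ℂ z) := by ring
  rw [h2, this]
  push_cast
  ring

/-- The ∂̄-derivative of the kernel. -/
lemma wbar_K (hτ : 0 < τ.im) (hz : 0 < z.im) (hne : z ≠ τ) :
    wderivBar (fun w => Kker r w τ) z = G2aux r τ (z, starRingEnd ℂ z) := by
  have hzτ : z - τ ≠ 0 := sub_ne_zero.mpr hne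
  have hB := hB0 (z := z) hz
  have hs := hslit hτ hz
  have hG : DifferentiableAt ℂ
      (fun p : ℂ × ℂ => 2 * Complex.I / (p.1 - τ) * (((p.2 - τ) / (p.2 - p.1)) ^ (r - 1)))
      (z, starRingEnd ℂ z) := by
    have d1 : DifferentiableAt ℂ (fun p : ℂ × ℂ => (p.1 - τ)⁻¹) (z, starRingEnd ℂ z) :=
      (differentiableAt_fst.sub (differentiableAt_const _)).inv hzτ
    have d2 : DifferentiableAt ℂ (fun p : ℂ × ℂ => (p.2 - τ) / (p.2 - p.1))
        (z, starRingEnd ℂ z) := by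
      simpa only [div_eq_mul_inv, Pi.mul_def, Pi.sub_def, Pi.inv_def] using
        (differentiableAt_snd.sub (differentiableAt_const _)).mul
          ((differentiableAt_snd.sub differentiableAt_fst :
            DifferentiableAt ℂ (fun p : ℂ × ℂ => p.2 - p.1) (z, starRingEnd ℂ z)).inv hB)
    have d3 : DifferentiableAt ℂ (fun p : ℂ × ℂ => ((p.2 - τ) / (p.2 - p.1)) ^ (r - 1))
        (z, starRingEnd ℂ z) := d2.cpow (differentiableAt_const _) hs
    simpa only [div_eq_mul_inv, Pi.mul_def] using ((differentiableAt_const (2 * Complex.I)).mul d1).mul d3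
  have hQ : HasDerivAt (fun v => 2 * Complex.I / (z - τ) * (((v - τ) / (v - z)) ^ (r - 1)))
      (G2aux r τ (z, starRingEnd ℂ z)) (starRingEnd ℂ z) := by
    have hdiv : HasDerivAt (fun v => (v - τ) / (v - z))
        ((1 * (starRingEnd ℂ z - z) - (starRingEnd ℂ z - τ) * 1) / (starRingEnd ℂ z - z) ^ 2)
        (starRingEnd ℂ z) :=
      HasDerivAt.div ((hasDerivAt_id _).sub_const τ) ((hasDerivAt_id _).sub_const z) hB
    have hpow := hdiv.cpow_const (c := r - 1) hs
    have hmul := hpow.const_mul (2 * Complex.I / (z - τ))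
    refine HasDerivAt.congr_deriv hmul ?_
    symm
    simp only [G2aux]
    rw [show r - 1 - 1 = r - 2 from by ring]
    set X := ((starRingEnd ℂ z - τ) / (starRingEnd ℂ z - z)) ^ (r - 2) with hX
    field_simp
    ring
  exact wderivBar_pair _ z _ hG hQ

/-- The ∂-derivative of the ∂̄-derivative of the kernel. -/
lemma wd_G2 (hτ : 0 < τ.im) (hz : 0 < z.im) (hne : z ≠ τ) :
    wderiv (fun w => G2aux r τ (w, starRingEnd ℂ w)) z = P2aux r τ z := by
  have hB := hB0 (z := z) hz
  have hs := hslit hτ hz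
  have hG : DifferentiableAt ℂ (G2aux r τ) (z, starRingEnd ℂ z) := by
    have d2 : DifferentiableAt ℂ (fun p : ℂ × ℂ => (p.2 - τ) / (p.2 - p.1))
        (z, starRingEnd ℂ z) := by
      simpa only [div_eq_mul_inv, Pi.mul_def, Pi.sub_def, Pi.inv_def] using
        (differentiableAt_snd.sub (differentiableAt_const _)).mul
          ((differentiableAt_snd.sub differentiableAt_fst :
            DifferentiableAt ℂ (fun p : ℂ × ℂ => p.2 - p.1) (z, starRingEnd ℂ z)).inv hB)
    have d3 : DifferentiableAt ℂ (fun p : ℂ × ℂ => ((p.2 - τ) / (p.2 - p.1)) ^ (r - 2))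
        (z, starRingEnd ℂ z) := d2.cpow (differentiableAt_const _) hs
    have d5 : DifferentiableAt ℂ (fun p : ℂ × ℂ => ((p.2 - p.1) ^ 2)⁻¹)
        (z, starRingEnd ℂ z) :=
      ((differentiableAt_snd.sub differentiableAt_fst).pow 2).inv (pow_ne_zero 2 hB)
    show DifferentiableAt ℂ
      (fun p : ℂ × ℂ =>
        -2 * Complex.I * (r - 1) * (((p.2 - τ) / (p.2 - p.1)) ^ (r - 2)) / (p.2 - p.1) ^ 2)
      (z, starRingEnd ℂ z)
    simpa only [div_eq_mul_inv, Pi.mul_def] using (d3.const_mul (-2 * Complex.I * (r - 1))).mul d5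
  have hP : HasDerivAt (fun u => G2aux r τ (u, starRingEnd ℂ z)) (P2aux r τ z) z := by
    have hden : HasDerivAt (fun u : ℂ => starRingEnd ℂ z - u) (-1) z := by
      simpa using (hasDerivAt_id z).const_sub (starRingEnd ℂ z)
    have hr2 : HasDerivAt (fun u => (starRingEnd ℂ z - τ) / (starRingEnd ℂ z - u))
        ((0 * (starRingEnd ℂ z - z) - (starRingEnd ℂ z - τ) * (-1)) / (starRingEnd ℂ z - z) ^ 2)
        z := (hasDerivAt_const z (starRingEnd ℂ z - τ)).div hden hB
    have hpow := hr2.cpow_const (c := r - 2) hs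
    have hmul := hpow.const_mul (-2 * Complex.I * (r - 1))
    have hsq := hden.pow 2
    have hfin := hmul.div hsq (pow_ne_zero 2 hB)
    refine HasDerivAt.congr_deriv hfin ?_
    symm
    simp only [P2aux]
    rw [show r - 2 - 1 = r - 3 from by ring]
    set X3 := ((starRingEnd ℂ z - τ) / (starRingEnd ℂ z - z)) ^ (r - 3) with hX3
    set X2 := ((starRingEnd ℂ z - τ) / (starRingEnd ℂ z - z)) ^ (r - 2) with hX2
    simp only [Pi.pow_apply]
    field_simp
    ring
  exact wderiv_pair _ z _ hG hP
end facts

lemma real_mul_cpow {y : ℝ} (hy : 0 < y) {x : ℂ} (hx : x ≠ 0) (s : ℂ) :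
    ((y : ℂ) * x) ^ s = (y : ℂ) ^ s * x ^ s := by
  have hy0 : (y : ℂ) ≠ 0 := Complex.ofReal_ne_zero.mpr hy.ne'
  rw [Complex.cpow_def_of_ne_zero (mul_ne_zero hy0 hx),
    Complex.cpow_def_of_ne_zero hx, Complex.cpow_def_of_ne_zero hy0,
    Complex.log_ofReal_mul hy hx, add_mul, Complex.exp_add,
    ← Complex.ofReal_log hy.le]

/-- `ξ_r K_r(·;τ) (z) = (r̄-1) ((z-τ̄)/(2i))^(r̄-2)`; in particular
`K_r(·;τ)` is `r`-harmonic on `ℍ \ {τ}`. -/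
theorem shadow_of_kernel (r τ : ℂ) (hτ : 0 < τ.im) :
    (∀ z : ℂ, 0 < z.im → z ≠ τ →
        shadowOp r (fun w => Kker r w τ) z =
          (starRingEnd ℂ r - 1) *
            (((z - starRingEnd ℂ τ) / (2 * Complex.I)) ^ (starRingEnd ℂ r - 2))) ∧
    (∀ z : ℂ, 0 < z.im → z ≠ τ → hlaplacian r (fun w => Kker r w τ) z = 0) := by
  constructor
  · intro z hz hne
    have hB := hB0 (z := z) hz
    have hs := hslit (τ := τ) (z := z) hτ hz
    have hq0 := hslit0 (τ := τ) (z := z) hτ hz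
    have hyC : ((z.im : ℂ)) ≠ 0 := Complex.ofReal_ne_zero.mpr hz.ne'
    show 2 * Complex.I * ((z.im : ℂ) ^ (starRingEnd ℂ r)) *
        (starRingEnd ℂ) (wderivBar (fun w => Kker r w τ) z) = _
    rw [wbar_K hτ hz hne]
    set rb := starRingEnd ℂ r with hrb
    have hDq : starRingEnd ℂ ((starRingEnd ℂ z - τ) / (starRingEnd ℂ z - z))
        = (z - starRingEnd ℂ τ) / (2 * (z.im : ℂ) * Complex.I) := by
      rw [map_div₀, map_sub, map_sub, Complex.conj_conj, Complex.sub_conj]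
      push_cast
      ring_nf
    have hD0 : (z - starRingEnd ℂ τ) / (2 * (z.im : ℂ) * Complex.I) ≠ 0 := by
      rw [← hDq]
      intro h
      exact hq0 (by simpa using congrArg (starRingEnd ℂ) h)
    have hconjpow : starRingEnd ℂ (((starRingEnd ℂ z - τ) / (starRingEnd ℂ z - z)) ^ (r - 2))
        = ((z - starRingEnd ℂ τ) / (2 * (z.im : ℂ) * Complex.I)) ^ (rb - 2) := by
      have harg := Complex.slitPlane_arg_ne_pi hs
      have h1 := Complex.conj_cpow _ (rb - 2) harg
      have h2 : starRingEnd ℂ (rb - 2) = r - 2 := by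
        rw [map_sub, hrb, Complex.conj_conj]
        norm_num [Complex.ext_iff]
      rw [h2] at h1
      rw [← h1, hDq]
    have hCD : (z - starRingEnd ℂ τ) / (2 * Complex.I)
        = (z.im : ℂ) * ((z - starRingEnd ℂ τ) / (2 * (z.im : ℂ) * Complex.I)) := by
      field_simp
    have hCpow : ((z - starRingEnd ℂ τ) / (2 * Complex.I)) ^ (rb - 2)
        = (z.im : ℂ) ^ (rb - 2) *
          ((z - starRingEnd ℂ τ) / (2 * (z.im : ℂ) * Complex.I)) ^ (rb - 2) := by
      rw [hCD, real_mul_cpow hz hD0]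
    have hysplit : (z.im : ℂ) ^ rb = (z.im : ℂ) ^ (rb - 2) * (z.im : ℂ) ^ (2 : ℕ) := by
      rw [← Complex.cpow_natCast, ← Complex.cpow_add _ _ hyC]
      norm_num
    rw [hCpow, hysplit]
    simp only [G2aux, map_div₀, map_mul, map_pow, map_sub, map_neg, map_ofNat,
      Complex.conj_I, Complex.conj_conj, map_one, hconjpow]
    rw [Complex.sub_conj]
    push_cast
    set D := ((z - starRingEnd ℂ τ) / (2 * (z.im : ℂ) * Complex.I)) ^ (rb - 2) with hD
    set Y := (z.im : ℂ) ^ (rb - 2) with hY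
    field_simp
    ring_nf
    try simp only [Complex.I_sq]
    try ring_nf
    try ring
  · intro z hz hne
    have hB := hB0 (z := z) hz
    have hs := hslit (τ := τ) (z := z) hτ hz
    have hq0 := hslit0 (τ := τ) (z := z) hτ hz
    have hyC : ((z.im : ℂ)) ≠ 0 := Complex.ofReal_ne_zero.mpr hz.ne'
    have hev : (fun w => wderivBar (fun w' => Kker r w' τ) w) =ᶠ[nhds z]
        (fun w => G2aux r τ (w, starRingEnd ℂ w)) := by
      have hU : IsOpen {w : ℂ | 0 < w.im ∧ w ≠ τ} := by
        have : {w : ℂ | 0 < w.im ∧ w ≠ τ} = {w : ℂ | 0 < w.im} ∩ {w : ℂ | w ≠ τ} := rfl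
        rw [this]
        exact (isOpen_lt continuous_const Complex.continuous_im).inter isOpen_ne
      filter_upwards [hU.mem_nhds ⟨hz, hne⟩] with w hw
      exact wbar_K hτ hw.1 hw.2
    have hwd : wderiv (fun w => wderivBar (fun w' => Kker r w' τ) w) z = P2aux r τ z := by
      have h := hev.fderiv_eq (𝕜 := ℝ)
      simp only [wderiv]
      rw [h]
      have h2 := wd_G2 (r := r) hτ hz hne
      simpa only [wderiv] using h2
    show -4 * (z.im : ℂ) ^ 2 * wderiv (fun w => wderivBar (fun w' => Kker r w' τ) w) z +
        2 * Complex.I * r * (z.im : ℂ) * wderivBar (fun w => Kker r w τ) z = 0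
    rw [hwd, wbar_K hτ hz hne]
    have hq2 : ((starRingEnd ℂ z - τ) / (starRingEnd ℂ z - z)) ^ (r - 2)
        = ((starRingEnd ℂ z - τ) / (starRingEnd ℂ z - z)) ^ (r - 3) *
          ((starRingEnd ℂ z - τ) / (starRingEnd ℂ z - z)) := by
      rw [show r - 2 = (r - 3) + 1 from by ring, Complex.cpow_add _ _ hq0, Complex.cpow_one]
    simp only [G2aux, P2aux]
    rw [hq2, hBy z]
    set X3 := ((starRingEnd ℂ z - τ) / -(2 * (z.im : ℂ) * Complex.I)) ^ (r - 3) with hX3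
    have hI4 : Complex.I ^ 4 = 1 := by
      rw [show (4 : ℕ) = 2 * 2 from rfl, pow_mul, Complex.I_sq]; norm_num
    have hI6 : Complex.I ^ 6 = -1 := by
      rw [show (6 : ℕ) = 2 * 3 from rfl, pow_mul, Complex.I_sq]; norm_num
    field_simp
    ring_nf
    simp only [hI4, hI6, Complex.I_sq]
    ring
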